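/- arXiv:2109.09481 — 4 statements merged into one kernel-verified Lean document; each statement's English description precedes it below -/
import Mathlib

section
/- Let k ≥ 1 and let ω_2,…,ω_k be integers. In the polynomial ring ℤ[x_1,…,x_k], consider the k×k matrix M′ whose rows are indexed by i ∈ {1,…,k} and whose columns are as follows: for l ∈ {1,…,k−1}, the l-th column has entries M′_{i,l} = 1 − (ω_{l+1}−1)x_i if i = l+1 and M′_{i,l} = −ω_{l+1} x_i otherwise; the last (k-th) column has entries M′_{i,k} = −x_i. Then det(M′) = (−1)^k · x_1 · ∏_{i=2}^k (1 + x_i). -/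
open MvPolynomial

/-- **Claim 1 in the proof of Theorem 1.2.** In `ℤ[x_1,…,x_k]`, the matrix `M′`
(whose columns `l = 1,…,k−1` have entries `1 − (ω_{l+1}−1)x_i` for `i = l+1` and
`−ω_{l+1} x_i` otherwise, and whose last column has entries `−x_i`) satisfies
`det M′ = (−1)^k x_1 ∏_{i=2}^k (1 + x_i)`.
Here indices are `0`-based: the variable `X i` is `x_{i+1}` and `ω ⟨l⟩` is `ω_{l+1}`. -/
theorem det_M_prime (k : ℕ) (hk : 1 ≤ k) (ω : Fin k → ℤ)
    (M' : Matrix (Fin k) (Fin k) (MvPolynomial (Fin k) ℤ))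
    (hM' : ∀ i l : Fin k,
      M' i l =
        if h : (l : ℕ) + 1 < k then
          (if (i : ℕ) = (l : ℕ) + 1 then
              1 - MvPolynomial.C (ω ⟨(l : ℕ) + 1, h⟩ - 1) * MvPolynomial.X i
            else -(MvPolynomial.C (ω ⟨(l : ℕ) + 1, h⟩) * MvPolynomial.X i))
        else -MvPolynomial.X i) :
    M'.det = (-1) ^ k * MvPolynomial.X (⟨0, hk⟩ : Fin k) *
      ∏ i ∈ Finset.univ.filter (fun i : Fin k => 1 ≤ (i : ℕ)),
        (1 + MvPolynomial.X i) := by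
  obtain ⟨m, rfl⟩ : ∃ m, k = m + 1 := ⟨k - 1, (Nat.succ_pred_eq_of_pos hk).symm⟩
  -- The matrix after the column operations
  set N : Matrix (Fin (m + 1)) (Fin (m + 1)) (MvPolynomial (Fin (m + 1)) ℤ) := fun i l =>
    if (l : ℕ) + 1 < m + 1 then
      (if (i : ℕ) = (l : ℕ) + 1 then 1 + MvPolynomial.X i else 0)
    else -MvPolynomial.X i with hN
  have hlast : ∀ i : Fin (m + 1), N i (Fin.last m) = -MvPolynomial.X i := by
    intro i; simp [hN, Fin.last]
  -- coefficients of the column operation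
  set c : Fin (m + 1) → MvPolynomial (Fin (m + 1)) ℤ := fun l =>
    if h : (l : ℕ) + 1 < m + 1 then MvPolynomial.C (ω ⟨(l : ℕ) + 1, h⟩) else 0 with hc
  have step1 : M'.det = N.det := by
    rw [← Matrix.det_transpose M', ← Matrix.det_transpose N]
    apply Matrix.det_eq_of_forall_row_eq_smul_add_const c (Fin.last m)
    · simp [hc]
    · intro l i
      simp only [Matrix.transpose_apply, hM', hc, hlast]
      simp only [hN, map_sub, map_one]
      split_ifs with h hi <;> ring
  rw [step1]
  -- Permute rows by the rotation to make N upper triangular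
  have hperm := Matrix.det_permute (finRotate (m + 1)) N
  have hrot : ∀ i : Fin (m + 1), ((finRotate (m + 1)) i : ℕ)
      = if (i : ℕ) + 1 < m + 1 then (i : ℕ) + 1 else 0 := by
    intro i
    rw [finRotate_succ_apply, Fin.val_add_one]
    by_cases hi : i = Fin.last m
    · rw [if_pos hi, if_neg]
      simp [hi, Fin.last]
    · rw [if_neg hi, if_pos]
      have := Fin.val_lt_last hi
      omega
  have htri : (N.submatrix (finRotate (m + 1)) id).det
      = ∏ i : Fin (m + 1), N ((finRotate (m + 1)) i) i := by
    apply Matrix.det_of_upperTriangular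
    intro i j hij
    have hij' : (j : ℕ) < (i : ℕ) := hij
    have hj : (j : ℕ) + 1 < m + 1 := by have := i.isLt; omega
    simp only [Matrix.submatrix_apply, id]
    simp only [hN]
    rw [if_pos hj, if_neg]
    have hr := hrot i
    intro hcon
    by_cases h : (i : ℕ) + 1 < m + 1
    · rw [if_pos h] at hr; omega
    · rw [if_neg h] at hr; omega
  -- compute the diagonal product
  have h1 : ∀ i : Fin m, (finRotate (m + 1)) i.castSucc = i.succ := by
    intro i
    apply Fin.ext
    rw [hrot]
    have : ((i.castSucc : Fin (m + 1)) : ℕ) = (i : ℕ) := rfl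
    rw [this, if_pos (by omega)]
    simp
  have h2 : (finRotate (m + 1)) (Fin.last m) = (⟨0, hk⟩ : Fin (m + 1)) := by
    apply Fin.ext
    rw [hrot]
    simp [Fin.last]
  have hprod : ∏ i : Fin (m + 1), N ((finRotate (m + 1)) i) i
      = (∏ i : Fin m, (1 + MvPolynomial.X i.succ)) * (-MvPolynomial.X (⟨0, hk⟩ : Fin (m + 1))) := by
    rw [Fin.prod_univ_castSucc]
    congr 1
    · apply Finset.prod_congr rfl
      intro i _
      rw [h1]
      simp only [hN, Fin.coe_castSucc, Fin.val_succ]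
      rw [if_pos (by omega)]
      simp
    · rw [h2, hlast]
  have hfilter : (∏ i ∈ Finset.univ.filter (fun i : Fin (m + 1) => 1 ≤ (i : ℕ)),
        (1 + MvPolynomial.X i)) = ∏ i : Fin m,
        ((1 : MvPolynomial (Fin (m + 1)) ℤ) + MvPolynomial.X i.succ) := by
    rw [Finset.prod_filter, Fin.prod_univ_succ]
    simp
  have hsign : ((Equiv.Perm.sign (finRotate (m + 1)) : ℤ) : MvPolynomial (Fin (m + 1)) ℤ)
      = (-1) ^ m := by
    rw [sign_finRotate]
    push_cast
    ring
  have hdet : N.det = (-1) ^ m * (N.submatrix (finRotate (m + 1)) id).det := by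
    rw [hperm, ← mul_assoc]
    rw [hsign]
    have : ((-1 : MvPolynomial (Fin (m + 1)) ℤ) ^ m) * (-1) ^ m = 1 := by
      rw [← mul_pow]; norm_num
    rw [this, one_mul]
  rw [hdet, htri, hprod, hfilter]
  ring
end

section
/- Let k ≥ 1 and let ω_1,…,ω_k be integers. In the polynomial ring ℤ[x_1,…,x_k,y], consider the (k+1)×(k+1) matrix M defined by: M_{ij} = δ_{ij}(1 + x_i) − ω_j x_i for 1 ≤ i,j ≤ k; M_{i,k+1} = −x_i for 1 ≤ i ≤ k; M_{k+1,1} = −y; M_{k+1,j} = 0 for 2 ≤ j ≤ k; and M_{k+1,k+1} = 1. Then det(M) = −y·x_1·∏_{i=2}^k (1 + x_i) + ∏_{i=1}^k (1 + x_i) − ∑_{j=1}^k ω_j x_j ∏_{i≠j} (1 + x_i). -/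
open MvPolynomial

private lemma det_updateRow_one' {m : Type*} [DecidableEq m] [Fintype m] {R : Type*} [CommRing R]
    (j : m) (v : m → R) : ((1 : Matrix m m R).updateRow j v).det = v j := by
  rw [← Matrix.det_transpose, ← Matrix.transpose_one, Matrix.updateRow_transpose,
    Matrix.transpose_transpose, ← Matrix.cramer_apply]
  simp

private lemma det_diag_sub_rankOne' {m : Type*} [DecidableEq m] [Fintype m] {R : Type*}
    [CommRing R] (d u v : m → R) :
    (Matrix.of fun i j => (if i = j then d i else 0) - u i * v j).det
      = ∏ i, d i - ∑ j, u j * v j * ∏ i ∈ Finset.univ.erase j, d i := by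
  classical
  set a : m → m → R := fun i => (-u i) • v with ha
  set b : m → m → R := fun i => d i • (1 : Matrix m m R) i with hb
  have hM : (Matrix.of fun i j => (if i = j then d i else 0) - u i * v j) = a + b := by
    ext i j
    simp [a, b, Matrix.one_apply, eq_comm]
    ring
  have key : (Matrix.of fun i j => (if i = j then d i else 0) - u i * v j).det
      = ∑ s : Finset m, (Matrix.detRowAlternating (s.piecewise a b) : R) := by
    rw [hM]
    exact (Matrix.detRowAlternating.toMultilinearMap.map_add_univ a b)
  have hterm : ∀ s : Finset m, (Matrix.detRowAlternating (s.piecewise a b) : R)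
      = (∏ i, s.piecewise (fun i => -u i) d i) *
        (Matrix.of (s.piecewise (fun _ => v) (fun i => (1 : Matrix m m R) i))).det := by
    intro s
    have : s.piecewise a b = fun i => (s.piecewise (fun i => -u i) d i) •
        (s.piecewise (fun _ => v) (fun i => (1 : Matrix m m R) i) i) := by
      funext i
      by_cases h : i ∈ s <;> simp [Finset.piecewise, h, a, b]
    rw [this]
    have := Matrix.detRowAlternating.toMultilinearMap.map_smul_univ
      (fun i => s.piecewise (fun i => -u i) d i)
      (s.piecewise (fun _ => v) (fun i => (1 : Matrix m m R) i))
    exact this.trans (smul_eq_mul _ _)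
  have hvanish : ∀ s : Finset m, s ∉ insert (∅ : Finset m)
        (Finset.univ.image fun j => ({j} : Finset m)) →
      (Matrix.detRowAlternating (s.piecewise a b) : R) = 0 := by
    intro s hs
    simp only [Finset.mem_insert, Finset.mem_image, Finset.mem_univ, true_and] at hs
    push_neg at hs
    obtain ⟨h0, h1⟩ := hs
    have hcard : 1 < s.card := by
      rcases Nat.lt_or_ge s.card 2 with h | h
      · interval_cases hc : s.card
        · exact absurd (Finset.card_eq_zero.mp hc) (Finset.nonempty_iff_ne_empty.mp h0)
        · obtain ⟨x, hx⟩ := Finset.card_eq_one.mp hc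
          exact absurd hx.symm (h1 x)
      · omega
    obtain ⟨x, hx, y, hy, hxy⟩ := Finset.one_lt_card.mp hcard
    rw [hterm s]
    have : (Matrix.of (s.piecewise (fun _ => v) (fun i => (1 : Matrix m m R) i))).det = 0 := by
      apply Matrix.det_zero_of_row_eq hxy
      funext j'
      simp [Finset.piecewise, hx, hy]
    rw [this, mul_zero]
  have hsum : (∑ s : Finset m, (Matrix.detRowAlternating (s.piecewise a b) : R))
      = ∑ s ∈ insert (∅ : Finset m) (Finset.univ.image fun j => ({j} : Finset m)),
          (Matrix.detRowAlternating (s.piecewise a b) : R) := by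
    refine (Finset.sum_subset (Finset.subset_univ _) ?_).symm
    intro s _ hs
    exact hvanish s hs
  have hempty : (Matrix.detRowAlternating ((∅ : Finset m).piecewise a b) : R) = ∏ i, d i := by
    rw [hterm]
    have : (Matrix.of ((∅ : Finset m).piecewise (fun _ => v) (fun i => (1 : Matrix m m R) i)))
        = (1 : Matrix m m R) := by
      ext i j; simp [Finset.piecewise]
    rw [this]
    simp
  have hsingle : ∀ j : m, (Matrix.detRowAlternating (({j} : Finset m).piecewise a b) : R)
      = -(u j * v j * ∏ i ∈ Finset.univ.erase j, d i) := by
    intro j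
    rw [hterm]
    have h1 : (Matrix.of (({j} : Finset m).piecewise (fun _ => v)
          (fun i => (1 : Matrix m m R) i)))
        = (1 : Matrix m m R).updateRow j v := by
      ext i i'
      by_cases h : i = j <;> simp [Finset.piecewise, h, Matrix.updateRow_apply]
    have h2 : (∏ i, ({j} : Finset m).piecewise (fun i => -u i) d i)
        = (-u j) * ∏ i ∈ Finset.univ.erase j, d i := by
      rw [Finset.prod_piecewise]
      simp [Finset.sdiff_singleton_eq_erase]
    rw [h1, h2, det_updateRow_one']
    ring
  rw [key, hsum, Finset.sum_insert (by simp), Finset.sum_image (by simpa using Finset.singleton_injective), hempty]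
  rw [Finset.sum_congr rfl (fun j _ => hsingle j)]
  rw [Finset.sum_neg_distrib]
  ring

/-- In `ℤ[x_1,…,x_k,y]` (here the variable `X (some i)` is `x_{i+1}` and
`X none` is `y`), the `(k+1)×(k+1)` matrix `M = I_{k+1} − T·A` (rows/columns `some i`
correspond to `1 ≤ i ≤ k`, row/column `none` is the last one) satisfies
`det M = −y x_1 ∏_{i=2}^k (1+x_i) + ∏_{i=1}^k (1+x_i) − ∑_j ω_j x_j ∏_{i≠j} (1+x_i)`. -/
theorem det_M_full (k : ℕ) (hk : 1 ≤ k) (ω : Fin k → ℤ)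
    (M : Matrix (Option (Fin k)) (Option (Fin k)) (MvPolynomial (Option (Fin k)) ℤ))
    (hM₁ : ∀ i j : Fin k,
      M (some i) (some j) = (if i = j then 1 + MvPolynomial.X (some i) else 0) -
        MvPolynomial.C (ω j) * MvPolynomial.X (some i))
    (hM₂ : ∀ i : Fin k, M (some i) none = -MvPolynomial.X (some i))
    (hM₃ : ∀ j : Fin k, M none (some j) =
      if j = (⟨0, hk⟩ : Fin k) then -MvPolynomial.X (none : Option (Fin k)) else 0)
    (hM₄ : M none none = 1) :
    M.det =
      -(MvPolynomial.X (none : Option (Fin k)) *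
          MvPolynomial.X (some (⟨0, hk⟩ : Fin k)) *
          ∏ i ∈ Finset.univ.filter (fun i : Fin k => 1 ≤ (i : ℕ)),
            (1 + MvPolynomial.X (some i))) +
        (∏ i : Fin k, (1 + MvPolynomial.X (some i))) -
        ∑ j : Fin k, MvPolynomial.C (ω j) * MvPolynomial.X (some j) *
          ∏ i ∈ Finset.univ.filter (fun i : Fin k => i ≠ j),
            (1 + MvPolynomial.X (some i)) := by
  classical
  set e : Fin k ⊕ Unit ≃ Option (Fin k) :=
    { toFun := Sum.elim some (fun _ => none)
      invFun := fun o => o.elim (Sum.inr ()) Sum.inl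
      left_inv := by rintro (a | ⟨⟩) <;> rfl
      right_inv := by rintro (_ | a) <;> rfl } with he
  have hre : M.det = (M.submatrix e e).det := (Matrix.det_submatrix_equiv_self e M).symm
  have hblock : M.submatrix e e = Matrix.fromBlocks
      (Matrix.of fun i j : Fin k => M (some i) (some j))
      (Matrix.of fun (i : Fin k) (_ : Unit) => M (some i) none)
      (Matrix.of fun (_ : Unit) (j : Fin k) => M none (some j))
      (1 : Matrix Unit Unit _) := by
    ext i j : 1
    cases i <;> cases j <;> simp [e, Matrix.fromBlocks, hM₄, Matrix.one_apply]
  have heq : (Matrix.of fun i j : Fin k => M (some i) (some j)) -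
      (Matrix.of fun (i : Fin k) (_ : Unit) => M (some i) none) *
      (Matrix.of fun (_ : Unit) (j : Fin k) => M none (some j)) =
      Matrix.of fun i j : Fin k =>
        (if i = j then (1 + MvPolynomial.X (some i)) else 0) -
        (MvPolynomial.X (some i) : MvPolynomial (Option (Fin k)) ℤ) *
        (MvPolynomial.C (ω j) + if j = (⟨0, hk⟩ : Fin k) then MvPolynomial.X none else 0) := by
    ext i j : 1
    simp [Matrix.mul_apply, hM₁ i j, hM₂ i, hM₃ j]
    by_cases h : j = ⟨0, hk⟩ <;> simp [h] <;> ring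
  rw [hre, hblock, Matrix.det_fromBlocks_one₂₂, heq, det_diag_sub_rankOne']
  have hfil : ∀ j : Fin k, Finset.univ.filter (fun i : Fin k => i ≠ j) = Finset.univ.erase j :=
    fun j => Finset.filter_ne' _ _
  have hfil0 : Finset.univ.filter (fun i : Fin k => 1 ≤ (i : ℕ)) =
      Finset.univ.erase (⟨0, hk⟩ : Fin k) := by
    rw [← Finset.filter_ne']
    apply Finset.filter_congr
    intro i _
    simp [Fin.ext_iff]
    omega
  simp only [hfil, hfil0]
  have hsum : (∑ j : Fin k, MvPolynomial.X (some j) *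
        (MvPolynomial.C (ω j) +
          if j = (⟨0, hk⟩ : Fin k) then MvPolynomial.X (none : Option (Fin k)) else 0) *
        ∏ i ∈ Finset.univ.erase j, (1 + MvPolynomial.X (some i)))
      = (∑ j : Fin k, MvPolynomial.C (ω j) * MvPolynomial.X (some j) *
          ∏ i ∈ Finset.univ.erase j, (1 + MvPolynomial.X (some i)))
        + MvPolynomial.X (none : Option (Fin k)) * MvPolynomial.X (some (⟨0, hk⟩ : Fin k)) *
          ∏ i ∈ Finset.univ.erase (⟨0, hk⟩ : Fin k), (1 + MvPolynomial.X (some i)) := by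
    have hpt : ∀ j ∈ (Finset.univ : Finset (Fin k)), MvPolynomial.X (some j) *
        (MvPolynomial.C (ω j) +
          if j = (⟨0, hk⟩ : Fin k) then MvPolynomial.X (none : Option (Fin k)) else 0) *
        ∏ i ∈ Finset.univ.erase j, (1 + MvPolynomial.X (some i))
        = (MvPolynomial.C (ω j) * MvPolynomial.X (some j) *
            ∏ i ∈ Finset.univ.erase j, (1 + MvPolynomial.X (some i)))
          + if j = (⟨0, hk⟩ : Fin k) then
              MvPolynomial.X (none : Option (Fin k)) *
                MvPolynomial.X (some (⟨0, hk⟩ : Fin k)) *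
                ∏ i ∈ Finset.univ.erase (⟨0, hk⟩ : Fin k), (1 + MvPolynomial.X (some i))
            else 0 := by
      intro j _
      by_cases h : j = ⟨0, hk⟩
      · subst h; rw [if_pos rfl, if_pos rfl]; ring
      · simp only [if_neg h, add_zero]; ring
    rw [Finset.sum_congr rfl hpt, Finset.sum_add_distrib, Finset.sum_ite_eq' Finset.univ]
    simp
  rw [hsum]
  ring
end

section
/- Let k ≥ 1, let n_1,…,n_k be positive integers, let ω_1,…,ω_k be positive integers, and let δ_1,…,δ_k be nonnegative integers with δ_j ≤ n_j − 1 for all j. Fix an index i ∈ {1,…,k} with ω_i = 1, and suppose n_i satisfies n_i − 1 = ∑_{j≠i}(n_j − 1) + δ_i. Then for every integer m ≥ n_i, d((n_1,…,n_{i−1}, m, n_{i+1},…,n_k), δ, ω) = d((n_1,…,n_{i−1}, n_i, n_{i+1},…,n_k), δ, ω). -/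
open MvPolynomial

private lemma coeff_eq_zero_of_degreeOf_lt' {σ : Type*} {R : Type*} [CommSemiring R]
    {p : MvPolynomial σ R} {v : σ} {d : σ →₀ ℕ} (h : p.degreeOf v < d v) :
    MvPolynomial.coeff d p = 0 := by
  by_contra hc
  exact absurd (MvPolynomial.monomial_le_degreeOf v (MvPolynomial.mem_support_iff.2 hc))
    (not_le.2 h)

/-- **Proposition 6.1, stabilization.** In `ℤ[t_1,…,t_k,h]` (variables
`some i = t_{i+1}`, `none = h`), let `d(N)` be the coefficient of
`h^{∑δ_j} ∏_j t_j^{N_j−δ_j−1}` in `P(N,ω) = ∏_i ∑_{j=0}^{N_i−1} (t̂_i+h)^{N_i−1−j} t_i^j`,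
where `t̂_i = (∑_l ω_l t_l) − t_i`. If `ω_i = 1` and `n_i − 1 = ∑_{j≠i}(n_j−1) + δ_i`,
then `d` stabilizes in the `i`-th entry: `d(n with i-th entry m) = d(n)` for all `m ≥ n_i`. -/
theorem kalman_degree_stabilization (k : ℕ) (hk : 1 ≤ k)
    (n ω δ : Fin k → ℕ) (hn : ∀ j, 1 ≤ n j) (hω : ∀ j, 1 ≤ ω j)
    (hδ : ∀ j, δ j + 1 ≤ n j)
    (d : (Fin k → ℕ) → ℤ)
    (hd : ∀ N : Fin k → ℕ, d N =
      MvPolynomial.coeff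
        (Finsupp.equivFunOnFinite.symm
          (fun v : Option (Fin k) => v.elim (∑ j : Fin k, δ j)
            (fun j => N j - δ j - 1)))
        (∏ i : Fin k, ∑ j ∈ Finset.range (N i),
          ((∑ l : Fin k, (ω l : MvPolynomial (Option (Fin k)) ℤ) *
              MvPolynomial.X (some l)) - MvPolynomial.X (some i) +
            MvPolynomial.X (none : Option (Fin k))) ^ (N i - 1 - j) *
            MvPolynomial.X (some i) ^ j))
    (i : Fin k) (hωi : ω i = 1)
    (hni : n i - 1 = (∑ j ∈ Finset.univ.filter (fun j : Fin k => j ≠ i), (n j - 1)) + δ i)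
    (m : ℕ) (hm : n i ≤ m) :
    d (Function.update n i m) = d n := by
  classical
  rw [hd, hd]
  let A : Fin k → MvPolynomial (Option (Fin k)) ℤ := fun i' =>
    (∑ l : Fin k, (ω l : MvPolynomial (Option (Fin k)) ℤ) * MvPolynomial.X (some l))
      - MvPolynomial.X (some i') + MvPolynomial.X (none : Option (Fin k))
  let F : Fin k → ℕ → MvPolynomial (Option (Fin k)) ℤ := fun i' N =>
    ∑ j ∈ Finset.range N, A i' ^ (N - 1 - j) * MvPolynomial.X (some i') ^ j
  let T : (Fin k → ℕ) → (Option (Fin k) →₀ ℕ) := fun N =>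
    Finsupp.equivFunOnFinite.symm
      (fun v : Option (Fin k) => v.elim (∑ j : Fin k, δ j) (fun j => N j - δ j - 1))
  show MvPolynomial.coeff (T (Function.update n i m))
      (∏ i' : Fin k, F i' (Function.update n i m i'))
    = MvPolynomial.coeff (T n) (∏ i' : Fin k, F i' (n i'))
  -- basic degree facts
  have hTapp : ∀ (N : Fin k → ℕ) (v : Option (Fin k)),
      T N v = v.elim (∑ j : Fin k, δ j) (fun j => N j - δ j - 1) := by
    intro N v
    simp [T, Finsupp.coe_equivFunOnFinite_symm]
  have hcast : ∀ c : ℕ, ((c : ℕ) : MvPolynomial (Option (Fin k)) ℤ)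
      = MvPolynomial.C ((c : ℕ) : ℤ) := by
    intro c; exact (map_natCast (MvPolynomial.C (σ := Option (Fin k)) (R := ℤ)) c).symm
  have hXdeg0 : ∀ l : Fin k, l ≠ i →
      MvPolynomial.degreeOf (some i)
        (MvPolynomial.X (some l) : MvPolynomial (Option (Fin k)) ℤ) = 0 := by
    intro l hl
    rw [MvPolynomial.degreeOf_X]
    simp [Ne.symm hl]
  have hXnonedeg0 : MvPolynomial.degreeOf (some i)
      (MvPolynomial.X (none : Option (Fin k)) : MvPolynomial (Option (Fin k)) ℤ) = 0 := by
    rw [MvPolynomial.degreeOf_X]; simp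
  have hXideg : MvPolynomial.degreeOf (some i)
      (MvPolynomial.X (some i) : MvPolynomial (Option (Fin k)) ℤ) ≤ 1 := by
    rw [MvPolynomial.degreeOf_X]; simp
  have htermdeg : ∀ l : Fin k,
      MvPolynomial.degreeOf (some i)
        ((ω l : MvPolynomial (Option (Fin k)) ℤ) * MvPolynomial.X (some l)) ≤ 1 := by
    intro l
    refine (MvPolynomial.degreeOf_mul_le _ _ _).trans ?_
    rw [hcast, MvPolynomial.degreeOf_C]
    rw [MvPolynomial.degreeOf_X]
    split <;> simp
  have hSdeg : MvPolynomial.degreeOf (some i)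
      (∑ l : Fin k, (ω l : MvPolynomial (Option (Fin k)) ℤ) * MvPolynomial.X (some l)) ≤ 1 :=
    (MvPolynomial.degreeOf_sum_le _ _ _).trans (Finset.sup_le fun l _ => htermdeg l)
  have hnegdeg : ∀ i' : Fin k, MvPolynomial.degreeOf (some i)
      (-(MvPolynomial.X (some i') : MvPolynomial (Option (Fin k)) ℤ)) ≤ 1 := by
    intro i'
    have : (-(MvPolynomial.X (some i') : MvPolynomial (Option (Fin k)) ℤ))
        = MvPolynomial.C (-1 : ℤ) * MvPolynomial.X (some i') := by
      rw [map_neg, map_one]; ring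
    rw [this]
    refine (MvPolynomial.degreeOf_mul_le _ _ _).trans ?_
    rw [MvPolynomial.degreeOf_C, MvPolynomial.degreeOf_X]
    split <;> simp
  have hAdeg1 : ∀ i' : Fin k, MvPolynomial.degreeOf (some i) (A i') ≤ 1 := by
    intro i'
    show MvPolynomial.degreeOf (some i) (_ - _ + _) ≤ 1
    rw [sub_eq_add_neg]
    refine (MvPolynomial.degreeOf_add_le _ _ _).trans ?_
    refine max_le ((MvPolynomial.degreeOf_add_le _ _ _).trans
      (max_le hSdeg (hnegdeg i'))) ?_
    rw [hXnonedeg0]; omega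
  -- A i does not involve the variable `some i`
  have hAi : A i = (∑ l ∈ Finset.univ.erase i,
        (ω l : MvPolynomial (Option (Fin k)) ℤ) * MvPolynomial.X (some l))
      + MvPolynomial.X (none : Option (Fin k)) := by
    show (∑ l : Fin k, (ω l : MvPolynomial (Option (Fin k)) ℤ) * MvPolynomial.X (some l))
        - MvPolynomial.X (some i) + MvPolynomial.X (none : Option (Fin k)) = _
    rw [← Finset.add_sum_erase _ _ (Finset.mem_univ i), hωi]
    push_cast
    ring
  have hAideg0 : MvPolynomial.degreeOf (some i) (A i) = 0 := by
    rw [hAi]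
    refine Nat.le_zero.mp ((MvPolynomial.degreeOf_add_le _ _ _).trans (max_le ?_ ?_))
    · refine (MvPolynomial.degreeOf_sum_le _ _ _).trans (Finset.sup_le ?_)
      intro l hl
      refine (MvPolynomial.degreeOf_mul_le _ _ _).trans ?_
      rw [hcast, MvPolynomial.degreeOf_C, hXdeg0 l (Finset.mem_erase.1 hl).1]
    · rw [hXnonedeg0]
  -- degree bound for the factors with index ≠ i
  have hFdeg : ∀ j : Fin k, j ≠ i → ∀ N : ℕ,
      MvPolynomial.degreeOf (some i) (F j N) ≤ N - 1 := by
    intro j hj N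
    refine (MvPolynomial.degreeOf_sum_le _ _ _).trans (Finset.sup_le ?_)
    intro l hl
    refine (MvPolynomial.degreeOf_mul_le _ _ _).trans ?_
    have h1 : MvPolynomial.degreeOf (some i) (A j ^ (N - 1 - l)) ≤ N - 1 :=
      (MvPolynomial.degreeOf_pow_le _ _ _).trans
        (le_trans (Nat.mul_le_mul_left _ (hAdeg1 j)) (by omega))
    have h2 : MvPolynomial.degreeOf (some i)
        ((MvPolynomial.X (some j) : MvPolynomial (Option (Fin k)) ℤ) ^ l) ≤ 0 :=
      (MvPolynomial.degreeOf_pow_le _ _ _).trans (by rw [hXdeg0 j hj]; omega)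
    omega
  -- Q : the product over indices ≠ i
  set Q : MvPolynomial (Option (Fin k)) ℤ := ∏ j ∈ Finset.univ.erase i, F j (n j) with hQ
  have hDQ : MvPolynomial.degreeOf (some i) Q ≤ ∑ j ∈ Finset.univ.erase i, (n j - 1) :=
    (MvPolynomial.degreeOf_prod_le _ _ _).trans
      (Finset.sum_le_sum fun j hj => hFdeg j (Finset.mem_erase.1 hj).1 (n j))
  have hD : ∑ j ∈ Finset.univ.erase i, (n j - 1) + δ i = n i - 1 := by
    rw [← Finset.filter_ne' Finset.univ i]
    omega
  -- split the i-th factor for dimension m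
  have hsplit : F i m = (∑ j ∈ Finset.range (m - n i),
        A i ^ (m - 1 - j) * MvPolynomial.X (some i) ^ j)
      + MvPolynomial.X (some i) ^ (m - n i) * F i (n i) := by
    have h1 := Finset.sum_Ico_consecutive
      (fun j => A i ^ (m - 1 - j) * MvPolynomial.X (some i) ^ j)
      (Nat.zero_le (m - n i)) (Nat.sub_le m (n i))
    have h2 : F i m = ∑ j ∈ Finset.Ico 0 m,
        A i ^ (m - 1 - j) * MvPolynomial.X (some i) ^ j := by
      rw [← Finset.range_eq_Ico]
    rw [h2, ← h1, Finset.range_eq_Ico]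
    congr 1
    rw [Finset.sum_Ico_eq_sum_range]
    have hmm : m - (m - n i) = n i := by omega
    rw [hmm, Finset.mul_sum]
    refine Finset.sum_congr rfl ?_
    intro j hj
    have hjlt : j < n i := Finset.mem_range.1 hj
    have he1 : m - 1 - (m - n i + j) = n i - 1 - j := by omega
    have he2 : m - n i + j = (m - n i) + j := rfl
    rw [he1, he2, pow_add]
    ring
  -- decompose the product for `update n i m`
  have hupdate_prod : (∏ i' : Fin k, F i' (Function.update n i m i'))
      = F i m * Q := by
    rw [← Finset.mul_prod_erase Finset.univ _ (Finset.mem_univ i),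
      Function.update_self]
    congr 1
    refine Finset.prod_congr rfl ?_
    intro j hj
    rw [Function.update_of_ne (Finset.mem_erase.1 hj).1]
  have hn_prod : (∏ i' : Fin k, F i' (n i')) = F i (n i) * Q :=
    (Finset.mul_prod_erase Finset.univ _ (Finset.mem_univ i)).symm
  -- the shifted target exponent
  have hT : T (Function.update n i m)
      = Finsupp.single (some i) (m - n i) + T n := by
    ext v
    rw [Finsupp.add_apply, hTapp, hTapp, Finsupp.single_apply]
    cases v with
    | none => simp
    | some j =>
      by_cases hji : j = i
      · subst hji
        simp [Option.elim, Function.update_self]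
        have := hδ j
        omega
      · simp only [Option.elim, Function.update_of_ne hji]
        rw [if_neg (by simpa using fun h => hji h.symm)]
        omega
  -- value of the target exponent at `some i`
  have hTmi : T (Function.update n i m) (some i) = m - δ i - 1 := by
    rw [hTapp]
    simp [Function.update_self]
  -- the error term has zero coefficient
  have herr : MvPolynomial.coeff (T (Function.update n i m))
      ((∑ j ∈ Finset.range (m - n i),
        A i ^ (m - 1 - j) * MvPolynomial.X (some i) ^ j) * Q) = 0 := by
    rw [Finset.sum_mul, MvPolynomial.coeff_sum]
    refine Finset.sum_eq_zero ?_
    intro j hj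
    have hjlt : j < m - n i := Finset.mem_range.1 hj
    refine coeff_eq_zero_of_degreeOf_lt' (v := some i) ?_
    have hdeg : MvPolynomial.degreeOf (some i)
        (A i ^ (m - 1 - j) * MvPolynomial.X (some i) ^ j * Q)
        ≤ 0 + j + ∑ j' ∈ Finset.univ.erase i, (n j' - 1) := by
      refine (MvPolynomial.degreeOf_mul_le _ _ _).trans ?_
      have b1 : MvPolynomial.degreeOf (some i) (A i ^ (m - 1 - j)) ≤ 0 :=
        (MvPolynomial.degreeOf_pow_le _ _ _).trans (by rw [hAideg0]; omega)
      have b2 : MvPolynomial.degreeOf (some i)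
          ((MvPolynomial.X (some i) : MvPolynomial (Option (Fin k)) ℤ) ^ j) ≤ j :=
        (MvPolynomial.degreeOf_pow_le _ _ _).trans
          (le_trans (Nat.mul_le_mul_left _ hXideg) (by omega))
      have b3 := (MvPolynomial.degreeOf_mul_le (some i)
        (A i ^ (m - 1 - j)) (MvPolynomial.X (some i) ^ j))
      omega
    rw [hTmi]
    have := hδ i
    omega
  -- put everything together
  rw [hupdate_prod, hsplit, add_mul, MvPolynomial.coeff_add, herr, zero_add,
    mul_assoc, hT, MvPolynomial.X_pow_eq_monomial, MvPolynomial.coeff_monomial_mul,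
    one_mul, hn_prod]
end

section
/- Let k ≥ 1 and for each i ∈ {1,…,k} let V_i be a finite-dimensional complex vector space of dimension n_i equipped with a nondegenerate symmetric bilinear form B_i. Fix nonzero vectors x_i ∈ V_i, and in the tensor product V_1 ⊗ ⋯ ⊗ V_k define, for each i, the subspace W_i := { x_1 ⊗ ⋯ ⊗ x_{i−1} ⊗ w ⊗ x_{i+1} ⊗ ⋯ ⊗ x_k : w ∈ V_i with B_i(x_i, w) = 0 }. Let r be the number of indices i with B_i(x_i, x_i) = 0. Then the dimension of the subspace W_1 + ⋯ + W_k of V_1 ⊗ ⋯ ⊗ V_k equals ∑_{i=1}^k (n_i − 1) − max(0, r − 1). -/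
open scoped TensorProduct

open Submodule Set Function

private theorem exists_adapted {V : Type*} [AddCommGroup V] [Module ℂ V]
    [FiniteDimensional ℂ V] (K : Submodule ℂ V) (x : V) (hx : x ≠ 0) :
    ∃ u e : Set V, u ⊆ e ∧ x ∈ e ∧ LinearIndependent ℂ ((↑) : e → V) ∧
      ⊤ ≤ Submodule.span ℂ e ∧ Submodule.span ℂ u = K ∧ (x ∈ u ↔ x ∈ K) := by
  classical
  have key : ∀ s₀ : Set K, LinearIndependent ℂ ((↑) : s₀ → K) →
      ∃ u : Set V, Submodule.span ℂ u = K ∧ LinearIndependent ℂ ((↑) : u → V) ∧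
        (Subtype.val '' s₀) ⊆ u ∧ u ⊆ (K : Set V) := by
    intro s₀ (hs₀ : LinearIndepOn ℂ id s₀)
    refine ⟨Subtype.val '' (hs₀.extend (Set.subset_univ s₀)), ?_, ?_, ?_, ?_⟩
    · have h1 : Submodule.span ℂ (hs₀.extend (Set.subset_univ s₀)) = ⊤ := by
        rw [hs₀.span_extend_eq_span (Set.subset_univ s₀), Submodule.span_univ]
      have h2 : Subtype.val '' (hs₀.extend (Set.subset_univ s₀))
          = ⇑K.subtype '' (hs₀.extend (Set.subset_univ s₀)) := rfl
      rw [h2, Submodule.span_image, h1, Submodule.map_subtype_top]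
    · have h2 := hs₀.linearIndepOn_extend (Set.subset_univ s₀)
      have h3 := LinearIndependent.map' h2 K.subtype (Submodule.ker_subtype K)
      exact LinearIndepOn.id_image (v := (Subtype.val : K → V)) h3
    · exact Set.image_mono (hs₀.subset_extend _)
    · rintro _ ⟨y, -, rfl⟩; exact y.2
  by_cases hxK : x ∈ K
  · have hs₀ : LinearIndependent ℂ ((↑) : ({⟨x, hxK⟩} : Set K) → K) :=
      (linearIndepOn_singleton_iff (R := ℂ) (v := id)).mpr (by simp [Subtype.ext_iff, hx])
    obtain ⟨u, hspan, (hindu : LinearIndepOn ℂ id u), hsub, huK⟩ := key _ hs₀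
    have hxu : x ∈ u := hsub ⟨⟨x, hxK⟩, rfl, rfl⟩
    refine ⟨u, hindu.extend (Set.subset_univ u), hindu.subset_extend _,
      hindu.subset_extend _ hxu, hindu.linearIndepOn_extend _, ?_, hspan,
      by simp [hxu, hxK]⟩
    intro y _
    exact hindu.subset_span_extend (Set.subset_univ u) (Set.mem_univ y)
  · obtain ⟨u, hspan, (hindu : LinearIndepOn ℂ id u), -, huK⟩ := key ∅ (linearIndependent_empty ℂ K)
    have hxspan : x ∉ Submodule.span ℂ u := by rwa [hspan]
    have hins : LinearIndepOn ℂ id (insert x u) :=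
      hindu.id_insert hxspan
    have hxu : x ∉ u := fun h => hxK (huK h)
    refine ⟨u, hins.extend (Set.subset_univ _),
      (Set.subset_insert x u).trans (hins.subset_extend _),
      hins.subset_extend _ (Set.mem_insert x u),
      hins.linearIndepOn_extend _, ?_, hspan, by simp [hxK, hxu]⟩
    intro y _
    exact hins.subset_span_extend (Set.subset_univ _) (Set.mem_univ y)

private theorem indep_tprod {k : ℕ} {V : Fin k → Type*} [∀ i, AddCommGroup (V i)]
    [∀ i, Module ℂ (V i)] {κ : Fin k → Type*} (b : ∀ i, Module.Basis (κ i) ℂ (V i)) :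
    LinearIndependent ℂ
      (fun f : (∀ i, κ i) => PiTensorProduct.tprod ℂ (fun i => b i (f i))) := by
  classical
  rw [linearIndependent_iff]
  intro l hl
  ext g
  let Λ : (⨂[ℂ] i, V i) →ₗ[ℂ] ℂ :=
    PiTensorProduct.lift ((MultilinearMap.mkPiAlgebra ℂ (Fin k) ℂ).compLinearMap
      (fun i => (b i).coord (g i)))
  have hΛ : ∀ f : (∀ i, κ i), Λ (PiTensorProduct.tprod ℂ fun i => b i (f i))
      = if f = g then 1 else 0 := by
    intro f
    have : Λ (PiTensorProduct.tprod ℂ fun i => b i (f i))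
        = ∏ i, (b i).coord (g i) (b i (f i)) := by
      simp [Λ, PiTensorProduct.lift.tprod, MultilinearMap.compLinearMap_apply,
        MultilinearMap.mkPiAlgebra_apply]
    rw [this]
    by_cases hfg : f = g
    · subst hfg
      simp [Module.Basis.coord_apply, Module.Basis.repr_self]
    · obtain ⟨i, hi⟩ := Function.ne_iff.mp hfg
      rw [if_neg hfg]
      refine Finset.prod_eq_zero (Finset.mem_univ i) ?_
      simp [Module.Basis.coord_apply, Module.Basis.repr_self, Finsupp.single_apply, hi]
  have h0 := congrArg Λ hl
  rw [map_zero, Finsupp.linearCombination_apply, Finsupp.sum, map_sum] at h0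
  simp only [map_smul, hΛ, smul_eq_mul, mul_ite, mul_one, mul_zero] at h0
  rw [Finset.sum_ite_eq' l.support g] at h0
  by_cases hg : g ∈ l.support
  · rw [if_pos hg] at h0
    simpa using h0
  · simpa using Finsupp.notMem_support_iff.mp hg

/-- **linear-algebra content of Theorem 2.7 for ordinary tensors.**
For nonzero vectors `x_i` in complex vector spaces `V_i` with nondegenerate symmetric
bilinear forms `B_i`, the subspace `W_1 + ⋯ + W_k ⊆ V_1 ⊗ ⋯ ⊗ V_k`, where
`W_i = x_1 ⊗ ⋯ ⊗ (⟨x_i⟩^⊥) ⊗ ⋯ ⊗ x_k`, has dimension `∑_i (n_i − 1) − max(0, r − 1)`,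
`r` being the number of isotropic components `x_i`. -/
theorem dim_sum_W (k : ℕ) (hk : 1 ≤ k)
    (V : Fin k → Type*) [∀ i, AddCommGroup (V i)] [∀ i, Module ℂ (V i)]
    [∀ i, FiniteDimensional ℂ (V i)]
    (n : Fin k → ℕ) (hn : ∀ i, Module.finrank ℂ (V i) = n i)
    (B : ∀ i, LinearMap.BilinForm ℂ (V i))
    (hBnd : ∀ i, (B i).Nondegenerate) (hBsymm : ∀ i, (B i).IsSymm)
    (x : ∀ i, V i) (hx : ∀ i, x i ≠ 0)
    (W : Fin k → Submodule ℂ (⨂[ℂ] i, V i))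
    (hW : ∀ i, W i = Submodule.map
      ((PiTensorProduct.tprod ℂ (s := V)).toLinearMap x i)
      (LinearMap.ker (B i (x i))))
    (r : ℕ) (hr : r = Set.ncard {i : Fin k | B i (x i) (x i) = 0}) :
    (Module.finrank ℂ ↥(⨆ i, W i) : ℤ) =
      (∑ i : Fin k, ((n i : ℤ) - 1)) - max 0 ((r : ℤ) - 1) := by
  classical
  -- the linear functional `B i (x i)` is nonzero, hence surjective
  have hrank : ∀ i, Module.finrank ℂ ↥(LinearMap.ker (B i (x i))) + 1 = n i := by
    intro i
    have hphi : B i (x i) ≠ 0 := by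
      intro h
      exact hx i ((hBnd i).1 (x i) (fun y => by rw [h]; rfl))
    obtain ⟨y, hy⟩ : ∃ y, B i (x i) y ≠ 0 := by
      by_contra h
      push_neg at h
      exact hphi (LinearMap.ext fun y => h y)
    have h1 : LinearMap.range (B i (x i)) = ⊤ := by
      rw [LinearMap.range_eq_top]
      intro z
      refine ⟨(z * (B i (x i) y)⁻¹) • y, ?_⟩
      rw [map_smul, smul_eq_mul]
      field_simp
    have h2 := LinearMap.finrank_range_add_finrank_ker (B i (x i))
    rw [h1, finrank_top, Module.finrank_self, hn i] at h2
    omega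
  -- adapted bases
  choose u e hue hxe hinde hspane hspanu hxu using
    fun i => exists_adapted (LinearMap.ker (B i (x i))) (x i) (hx i)
  let bas : ∀ i, Module.Basis (e i) ℂ (V i) := fun i => Module.Basis.mk (hinde i) (by rw [Subtype.range_coe]; exact hspane i)
  have hbas : ∀ i (j : e i), bas i j = (j : V i) := fun i j => Module.Basis.mk_apply _ _ _
  haveI : ∀ i, Fintype (e i) := fun i => FiniteDimensional.fintypeBasisIndex (bas i)
  let β : (∀ i, e i) → (⨂[ℂ] i, V i) :=
    fun f => PiTensorProduct.tprod ℂ (fun i => bas i (f i))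
  have hβ : LinearIndependent ℂ β := indep_tprod bas
  let t : ∀ i, e i := fun i => ⟨x i, hxe i⟩
  let Sf : ∀ i, Finset (e i) := fun i => Finset.univ.filter (fun j => (j : V i) ∈ u i)
  let Af : ∀ i, Finset (∀ j, e j) := fun i => (Sf i).image (Function.update t i)
  let Ff : Finset (∀ j, e j) := Finset.univ.biUnion Af
  -- sets of basis vectors
  have huS : ∀ i, Subtype.val '' (↑(Sf i) : Set (e i)) = u i := by
    intro i
    ext y
    constructor
    · rintro ⟨j, hj, rfl⟩
      simpa [Sf] using hj
    · intro hy
      exact ⟨⟨y, hue i hy⟩, by simpa [Sf] using hy, rfl⟩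
  -- identification of the subspaces W i
  have hW' : ∀ i, W i = Submodule.span ℂ (β '' ↑(Af i)) := by
    intro i
    have hLu : (⇑((PiTensorProduct.tprod ℂ (s := V)).toLinearMap x i)) '' u i
        = β '' ↑(Af i) := by
      rw [← huS i]
      show _ '' (Subtype.val '' _) = _
      rw [show (↑(Af i) : Set (∀ j, e j)) = Function.update t i '' ↑(Sf i) from
        Finset.coe_image, Set.image_image, Set.image_image]
      refine Set.image_congr fun s _ => ?_
      show (PiTensorProduct.tprod ℂ (s := V)).toLinearMap x i (s : V i)
          = PiTensorProduct.tprod ℂ (fun j => bas j (Function.update t i s j))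
      rw [MultilinearMap.toLinearMap_apply]
      congr 1
      funext j
      by_cases hji : j = i
      · subst hji
        rw [Function.update_self, Function.update_self, hbas]
      · rw [Function.update_of_ne hji, Function.update_of_ne hji, hbas]
    rw [hW i, ← hspanu i, ← hLu, Submodule.span_image]
  have hsup : (⨆ i, W i) = Submodule.span ℂ (β '' ↑Ff) := by
    have : (↑Ff : Set (∀ j, e j)) = ⋃ i, (↑(Af i) : Set (∀ j, e j)) := by
      simp [Ff]
    rw [this, Set.image_iUnion, Submodule.span_iUnion]
    exact iSup_congr hW'
  -- rank of the span
  have hind2 : LinearIndependent ℂ ((↑) : ↥(β '' ↑Ff) → (⨂[ℂ] i, V i)) :=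
    LinearIndepOn.id_image (v := β) (hβ.comp Subtype.val Subtype.val_injective)
  haveI : Fintype ↥(β '' ↑Ff) := (Ff.finite_toSet.image β).fintype
  have hfr : (Module.finrank ℂ ↥(⨆ i, W i)) = Ff.card := by
    have himg : (β '' ↑Ff).toFinset = Ff.image β := by
      ext z
      simp only [Set.mem_toFinset, Set.mem_image, Finset.mem_image, Finset.mem_coe]
    rw [hsup, finrank_span_set_eq_card hind2, himg,
      Finset.card_image_of_injective _ hβ.injective]
  -- cardinalities
  have hcardA : ∀ i, (Af i).card = (Sf i).card :=
    fun i => Finset.card_image_of_injective _ (Function.update_injective t i)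
  have hcardS : ∀ i, ((Sf i).card : ℤ) = (n i : ℤ) - 1 := by
    intro i
    have humono : LinearIndependent ℂ ((↑) : u i → V i) := LinearIndepOn.mono (v := id) (hinde i) (hue i)
    have huf : (↑(Finset.image Subtype.val (Sf i)) : Set (V i)) = u i := by
      rw [Finset.coe_image]; exact huS i
    have hufli : LinearIndependent ℂ
        ((↑) : ↥(Finset.image Subtype.val (Sf i)) → V i) := by
      rw [← huf] at humono
      exact humono
    have h3 := finrank_span_finset_eq_card hufli
    rw [huf, hspanu i, Finset.card_image_of_injective _ Subtype.val_injective] at h3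
    have h4 := hrank i
    omega
  -- membership of `t` in `Af i` detects isotropy
  have htA : ∀ i, t ∈ Af i ↔ B i (x i) (x i) = 0 := by
    intro i
    constructor
    · rintro hmem
      obtain ⟨s, hs, hst⟩ := Finset.mem_image.mp hmem
      have hsx : s = t i := by
        have := congrFun hst i
        rwa [Function.update_self] at this
      rw [hsx] at hs
      have : ((t i : e i) : V i) ∈ u i := by simpa [Sf] using hs
      have := (hxu i).mp this
      rwa [LinearMap.mem_ker] at this
    · intro hiso
      refine Finset.mem_image.mpr ⟨t i, ?_, Function.update_eq_self i t⟩
      have : x i ∈ u i := (hxu i).mpr (LinearMap.mem_ker.mpr hiso)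
      simpa [Sf] using this
  -- two distinct `Af`'s intersect only in `t`
  have hpair : ∀ i j, i ≠ j → ∀ z, z ∈ Af i → z ∈ Af j → z = t := by
    intro i j hij z hzi hzj
    obtain ⟨s, _, rfl⟩ := Finset.mem_image.mp hzi
    obtain ⟨s', _, heq⟩ := Finset.mem_image.mp hzj
    have hsx : s = t i := by
      have h5 := congrFun heq i
      rw [Function.update_self, Function.update_of_ne hij] at h5
      exact h5.symm
    rw [hsx, Function.update_eq_self]
  -- relating r to the isotropic index set
  have hr' : r = (Finset.univ.filter (fun i => B i (x i) (x i) = 0)).card := by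
    rw [hr, Set.ncard_eq_toFinset_card', Set.toFinset_setOf]
  rw [hfr]
  by_cases hr0 : r = 0
  · -- no isotropic component
    have hniso : ∀ i, ¬ B i (x i) (x i) = 0 := by
      intro i hi
      have : (Finset.univ.filter (fun i => B i (x i) (x i) = 0)).Nonempty :=
        ⟨i, Finset.mem_filter.mpr ⟨Finset.mem_univ i, hi⟩⟩
      rw [← Finset.card_pos, ← hr', hr0] at this
      omega
    have hdisj : ∀ i ∈ (Finset.univ : Finset (Fin k)), ∀ j ∈ Finset.univ,
        i ≠ j → Disjoint (Af i) (Af j) := by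
      intro i _ j _ hij
      rw [Finset.disjoint_left]
      intro z hzi hzj
      have := hpair i j hij z hzi hzj
      subst this
      exact hniso i ((htA i).mp hzi)
    have hcard : Ff.card = ∑ i, (Af i).card := Finset.card_biUnion hdisj
    have : ((Ff.card : ℤ)) = ∑ i : Fin k, ((n i : ℤ) - 1) := by
      rw [hcard]
      push_cast
      refine Finset.sum_congr rfl fun i _ => ?_
      rw [hcardA i]
      exact_mod_cast hcardS i
    rw [this, hr0]
    norm_num
  · -- at least one isotropic component
    obtain ⟨i₀, hi₀⟩ : ∃ i, B i (x i) (x i) = 0 := by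
      have : (Finset.univ.filter (fun i => B i (x i) (x i) = 0)).Nonempty := by
        rw [← Finset.card_pos, ← hr']
        omega
      obtain ⟨i, hi⟩ := this
      exact ⟨i, (Finset.mem_filter.mp hi).2⟩
    have hr1 : 1 ≤ r := Nat.one_le_iff_ne_zero.mpr hr0
    let Gf : Fin k → Finset (∀ j, e j) := fun i => (Af i).erase t
    have hFf2 : Ff = insert t (Finset.univ.biUnion Gf) := by
      ext z
      simp only [Ff, Gf, Finset.mem_biUnion, Finset.mem_insert, Finset.mem_erase,
        Finset.mem_univ, true_and]
      constructor
      · rintro ⟨i, hz⟩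
        by_cases hzt : z = t
        · exact Or.inl hzt
        · exact Or.inr ⟨i, hzt, hz⟩
      · rintro (rfl | ⟨i, _, hz⟩)
        · exact ⟨i₀, (htA i₀).mpr hi₀⟩
        · exact ⟨i, hz⟩
    have htG : t ∉ Finset.univ.biUnion Gf := by
      simp [Gf]
    have hdisjG : ∀ i ∈ (Finset.univ : Finset (Fin k)), ∀ j ∈ Finset.univ,
        i ≠ j → Disjoint (Gf i) (Gf j) := by
      intro i _ j _ hij
      rw [Finset.disjoint_left]
      intro z hzi hzj
      have hzt : z ≠ t := (Finset.mem_erase.mp hzi).1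
      exact hzt (hpair i j hij z (Finset.mem_erase.mp hzi).2 (Finset.mem_erase.mp hzj).2)
    have hcard : Ff.card = (∑ i, (Gf i).card) + 1 := by
      rw [hFf2, Finset.card_insert_of_notMem htG, Finset.card_biUnion hdisjG]
    have hGcast : ∀ i, ((Gf i).card : ℤ)
        = ((n i : ℤ) - 1) - (if B i (x i) (x i) = 0 then 1 else 0) := by
      intro i
      show ((((Af i).erase t).card : ℤ)) = _
      have h2 := hcardS i
      by_cases hiso : B i (x i) (x i) = 0
      · have htAi : t ∈ Af i := (htA i).mpr hiso
        have h1 : 1 ≤ (Af i).card := Finset.card_pos.mpr ⟨t, htAi⟩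
        rw [if_pos hiso, Finset.card_erase_of_mem htAi, hcardA i] at *
        rw [Nat.cast_sub]
        · omega
        · exact h1
      · rw [if_neg hiso, Finset.erase_eq_of_notMem (fun h => hiso ((htA i).mp h)),
          hcardA i]
        omega
    have hsum : ∑ i : Fin k, (if B i (x i) (x i) = 0 then (1:ℤ) else 0) = r := by
      rw [hr']
      rw [Finset.sum_boole]
    have : ((Ff.card : ℤ)) = (∑ i : Fin k, ((n i : ℤ) - 1)) - (r : ℤ) + 1 := by
      rw [hcard]
      push_cast
      rw [Finset.sum_congr rfl fun i _ => hGcast i, Finset.sum_sub_distrib, hsum]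
    rw [this]
    have hmax : max 0 ((r : ℤ) - 1) = (r : ℤ) - 1 := by
      rw [max_eq_right]
      omega
    rw [hmax]
    ring
end
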